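/- For every α < ω₁ the set 𝒟_α = {p ∈ Q(T) : uᵖ contains an element x with ht(x) = α} is dense in Q(T); that is, every condition of Q(T) has an extension belonging to 𝒟_α. -/

import Mathlib

universe u

open Cardinal Ordinal Set Classical

noncomputable def omega1 : Ordinal.{u} := (Cardinal.aleph 1).ord

/-- Nodes: the root `none` together with the ordinals below `ω₁`. -/
abbrev Node : Type := Option omega1.{0}.ToType

/-- The ordinal below `ω₁` coded by an element of `omega1.toType`. -/
noncomputable def oVal (γ : omega1.{0}.ToType) : Ordinal.{0} :=
  ((Ordinal.ToType.mk (o := omega1.{0})).symm γ : Set.Iio omega1.{0})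

/-- `ht γ`: the unique `α` with `ω·α ≤ γ < ω·α + ω`, i.e. `γ / ω`; the root gets `⊥`,
regarded as smaller than every ordinal. -/
noncomputable def nodeHt : Node → WithBot Ordinal.{0}
  | none => ⊥
  | some γ => (↑(oVal γ / Ordinal.omega0) : WithBot Ordinal.{0})

def pLe {X : Type*} (lt : X → X → Prop) (a b : X) : Prop := lt a b ∨ a = b

/-- `m` is the meet (greatest common lower bound) of `x` and `y` inside `A`
with respect to the strict relation `lt`. -/
def IsMeetIn {X : Type*} (lt : X → X → Prop) (A : Set X) (x y m : X) : Prop :=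
  m ∈ A ∧ pLe lt m x ∧ pLe lt m y ∧ ∀ z ∈ A, pLe lt z x → pLe lt z y → pLe lt z m

/-- `lt` is a strict partial order with field inside `A`. -/
def StrictOrderOn {X : Type*} (A : Set X) (lt : X → X → Prop) : Prop :=
  (∀ x y, lt x y → x ∈ A ∧ y ∈ A) ∧ (∀ x, ¬ lt x x) ∧
    ∀ x y z, lt x y → lt y z → lt x z

/-- `lt` is a tree order on `A`: a strict partial order whose sets of strict
predecessors are well-ordered. -/
def TreeOrderOn {X : Type*} (A : Set X) (lt : X → X → Prop) : Prop :=
  StrictOrderOn A lt ∧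
  (∀ x ∈ A, ∀ y z, lt y x → lt z x → lt y z ∨ lt z y ∨ y = z) ∧
  ∀ x ∈ A, Set.WellFoundedOn {y | lt y x} lt

/-- The height of `x`: the order type of its set of strict `lt`-predecessors. -/
noncomputable def relHeight {X : Type u} (lt : X → X → Prop) (x : X) : Ordinal.{u} :=
  if h : IsWellOrder {y : X // lt y x} (fun a b => lt a.1 b.1) then @Ordinal.type _ _ h
  else 0

/-- `(A, lt)` is an Aronszajn tree: a tree of height `ω₁` with countable levels and no
uncountable chain. -/
def AronszajnOn {X : Type u} (A : Set X) (lt : X → X → Prop) : Prop :=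
  TreeOrderOn A lt ∧
  (∀ α : Ordinal.{u}, α < omega1.{u} → ∃ x ∈ A, relHeight lt x = α) ∧
  (∀ x ∈ A, relHeight lt x < omega1.{u}) ∧
  (∀ α : Ordinal.{u}, {x ∈ A | relHeight lt x = α}.Countable) ∧
  ∀ C ⊆ A, (∀ x ∈ C, ∀ y ∈ C, x ≠ y → lt x y ∨ lt y x) → C.Countable

/-- The ambient tree `T` of the forcing `Q(T)`: carrier `Tc ∋ none` (the root `r`),
strict order `ltT` with minimum the root, tree, heights of the nodes `γ ∈ S ⊆ ω₁`
equal to `γ / ω`, height `ω₁`, no uncountable chain, meets given by `meetT`. -/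
def AmbientOK (Tc : Set Node) (ltT : Node → Node → Prop)
    (meetT : Node → Node → Node) : Prop :=
  none ∈ Tc ∧
  StrictOrderOn Tc ltT ∧
  (∀ x ∈ Tc, x ≠ none → ltT none x) ∧
  (∀ x ∈ Tc, ∀ y z, ltT y x → ltT z x → ltT y z ∨ ltT z y ∨ y = z) ∧
  (∀ x ∈ Tc, Set.WellFoundedOn {y | ltT y x} ltT) ∧
  (∀ γ : omega1.{0}.ToType, some γ ∈ Tc →
      relHeight (fun a b => ltT a b ∧ a ≠ none) (some γ) = oVal γ / Ordinal.omega0) ∧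
  (∀ α : Ordinal.{0}, α < omega1.{0} →
      ∃ γ : omega1.{0}.ToType, some γ ∈ Tc ∧ oVal γ / Ordinal.omega0 = α) ∧
  (∀ C ⊆ Tc, (∀ x ∈ C, ∀ y ∈ C, x ≠ y → ltT x y ∨ ltT y x) → C.Countable) ∧
  ∀ x ∈ Tc, ∀ y ∈ Tc, IsMeetIn ltT Tc x y (meetT x y)

/-- A condition of the forcing `Q(T)`. -/
structure QCond : Type 1 where
  u : Finset Node
  v : Finset Node
  lt : Node → Node → Prop
  c : Node → Node → Option ℕ

/-- The requirements making `p` a condition of `Q(T)`. -/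
structure QValid (Tc : Set Node) (ltT : Node → Node → Prop)
    (meetT : Node → Node → Node) (p : QCond) : Prop where
  root_u : none ∈ p.u
  root_v : none ∈ p.v
  v_sub : ∀ y ∈ p.v, y ∈ Tc
  v_ht : ∀ y ∈ p.v, ∃ x ∈ p.u, nodeHt x = nodeHt y
  lt_dom : ∀ x y : Node, p.lt x y → x ∈ p.u ∧ y ∈ p.u
  lt_irrefl : ∀ x : Node, ¬ p.lt x x
  lt_trans : ∀ x y z : Node, p.lt x y → p.lt y z → p.lt x z
  lt_root : ∀ x ∈ p.u, x ≠ none → p.lt none x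
  lt_ht : ∀ x y : Node, p.lt x y → nodeHt x < nodeHt y
  lt_pred_linear : ∀ x y z : Node, p.lt x z → p.lt y z → p.lt x y ∨ p.lt y x ∨ x = y
  lt_meet : ∀ x ∈ p.u, ∀ y ∈ p.u, ∃ m : Node, IsMeetIn p.lt ↑p.u x y m
  c_dom : ∀ x y : Node, p.c x y ≠ none ↔
    (x ∈ p.u ∧ y ∈ p.v ∧ nodeHt x = nodeHt y ∧
      ∃ δ : Ordinal.{0}, Order.IsSuccLimit δ ∧ nodeHt x = (↑δ : WithBot Ordinal.{0}))
  c_spec : ∀ x₁ y₁ x₂ y₂ : Node, ∀ n : ℕ, p.c x₁ y₁ = some n → p.c x₂ y₂ = some n →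
    ¬ (x₁ = x₂ ∧ y₁ = y₂) →
      nodeHt x₁ ≠ nodeHt x₂ ∧
      (¬ p.lt x₁ x₂ ∧ ¬ p.lt x₂ x₁ ∧ x₁ ≠ x₂) ∧
      (¬ ltT y₁ y₂ ∧ ¬ ltT y₂ y₁ ∧ y₁ ≠ y₂) ∧
      ∀ m : Node, IsMeetIn p.lt ↑p.u x₁ x₂ m → nodeHt (meetT y₁ y₂) < nodeHt m

/-- The extension order of `Q(T)`. -/
def QLe (p q : QCond) : Prop :=
  p.u ⊆ q.u ∧ p.v ⊆ q.v ∧ (∀ x y : Node, p.lt x y → q.lt x y) ∧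
  (∀ x y : Node, ∀ n : ℕ, p.c x y = some n → q.c x y = some n) ∧
  ∀ x ∈ p.u, ∀ y ∈ p.u, ∀ m : Node,
    IsMeetIn p.lt ↑p.u x y m → IsMeetIn q.lt ↑q.u x y m

/-- For every `α < ω₁` the set of conditions whose first part contains an element of
height `α` is dense in `Q(T)`. -/
theorem QCond_dense_level (Tc : Set Node) (ltT : Node → Node → Prop)
    (meetT : Node → Node → Node) (hT : AmbientOK Tc ltT meetT)
    (α : Ordinal.{0}) (hα : α < omega1.{0}) :
    ∀ p : QCond, QValid Tc ltT meetT p →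
      ∃ q : QCond, QValid Tc ltT meetT q ∧ QLe p q ∧
        ∃ x ∈ q.u, nodeHt x = (↑α : WithBot Ordinal.{0}) := by
  intro p hp
  classical
  -- pick a fresh node X of height α
  have hwc : ∀ n : ℕ, Ordinal.omega0 * α + n < omega1.{0} := by
    intro n
    rw [omega1, Cardinal.lt_ord]
    rw [omega1, Cardinal.lt_ord] at hα
    rw [Ordinal.card_add, Ordinal.card_mul, Ordinal.card_omega0, Ordinal.card_nat]
    refine Cardinal.add_lt_of_lt (aleph0_le_aleph 1) ?_ ?_
    · exact Cardinal.mul_lt_of_lt (aleph0_le_aleph 1) aleph0_lt_aleph_one hα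
    · exact lt_of_lt_of_le (Cardinal.nat_lt_aleph0 n) (aleph0_le_aleph 1)
  set f : ℕ → Node := fun n =>
    some ((Ordinal.ToType.mk (o := omega1.{0})) ⟨Ordinal.omega0 * α + n, hwc n⟩) with hf
  have hfht : ∀ n, nodeHt (f n) = (↑α : WithBot Ordinal.{0}) := by
    intro n
    simp only [hf, nodeHt, oVal, OrderIso.symm_apply_apply]
    rw [Ordinal.mul_add_div _ Ordinal.omega0_ne_zero,
      Ordinal.div_eq_zero_of_lt (Ordinal.nat_lt_omega0 n), add_zero]
  have hfinj : Function.Injective f := by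
    intro n m hnm
    have h2 := (Ordinal.ToType.mk (o := omega1.{0})).injective (Option.some_injective _ hnm)
    have h3 : Ordinal.omega0 * α + n = Ordinal.omega0 * α + m := congrArg Subtype.val h2
    have : (n : Ordinal.{0}) = m := by rwa [add_right_inj] at h3
    exact_mod_cast this
  obtain ⟨X, hXr, hX⟩ : ∃ a ∈ Set.range f, a ∉ p.u :=
    (Set.infinite_range_of_injective hfinj).exists_notMem_finset p.u
  obtain ⟨nX, hnX⟩ := hXr
  have hXht : nodeHt X = (↑α : WithBot Ordinal.{0}) := hnX ▸ hfht nX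
  have hXne : X ≠ none := by rw [← hnX]; simp [hf]
  -- the new condition
  set U : Finset Node := insert X p.u with hU
  set L : Node → Node → Prop := fun a b => p.lt a b ∨ (a = none ∧ b = X) with hL
  set B : ℕ :=
    ((p.u ×ˢ p.v).biUnion fun z => (p.c z.1 z.2).toFinset).sup id + 1 with hB
  set P : Node → Node → Prop := fun x y =>
    x = X ∧ y ∈ p.v ∧ nodeHt y = (↑α : WithBot Ordinal.{0}) ∧ Order.IsSuccLimit α with hP
  set C : Node → Node → Option ℕ := fun x y =>
    if h : P x y then some (B + (p.v.equivFin ⟨y, h.2.1⟩).val) else p.c x y with hC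
  -- basic facts
  have hnotltX : ∀ a, ¬ p.lt a X := fun a h => hX (hp.lt_dom a X h).2
  have hnotXlt : ∀ a, ¬ p.lt X a := fun a h => hX (hp.lt_dom X a h).1
  have hnotltnone : ∀ a, ¬ p.lt a none := by
    intro a h
    have := hp.lt_ht a none h
    simp [nodeHt] at this
  have hLX : ∀ b, ¬ L X b := by
    rintro b (h | ⟨h1, h2⟩)
    · exact hnotXlt b h
    · exact hXne h1
  have hLnone : ∀ a, ¬ L a none := by
    rintro a (h | ⟨h1, h2⟩)
    · exact hnotltnone a h
    · exact hXne h2.symm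
  have hLtoX : ∀ a, L a X → a = none := by
    rintro a (h | ⟨h1, h2⟩)
    · exact absurd h (hnotltX a)
    · exact h1
  have hLelim : ∀ a b, L a b → b ≠ X → p.lt a b := by
    rintro a b (h | ⟨h1, h2⟩) hb
    · exact h
    · exact absurd h2 hb
  have hmemne : ∀ b ∈ p.u, b ≠ X := fun b hb h => hX (h ▸ hb)
  have hpLe_pq : ∀ a b, b ∈ p.u → (pLe p.lt a b ↔ pLe L a b) := by
    intro a b hb
    constructor
    · rintro (h | h)
      · exact Or.inl (Or.inl h)
      · exact Or.inr h
    · rintro (h | h)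
      · exact Or.inl (hLelim a b h (hmemne b hb))
      · exact Or.inr h
  have hnotXb : ∀ b ∈ p.u, ¬ pLe L X b := by
    rintro b hb (h | h)
    · exact hLX b h
    · exact hmemne b hb h.symm
  -- transfer of meets
  have hmeet_pq : ∀ x ∈ p.u, ∀ y ∈ p.u, ∀ m : Node,
      IsMeetIn p.lt ↑p.u x y m → IsMeetIn L ↑U x y m := by
    intro x hx y hy m ⟨hm, h1, h2, h3⟩
    have hmu : m ∈ p.u := hm
    refine ⟨by simp [hU]; exact Or.inr hmu, (hpLe_pq m x hx).1 h1, (hpLe_pq m y hy).1 h2, ?_⟩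
    intro z hz hzx hzy
    have hzU : z ∈ U := hz
    rcases Finset.mem_insert.1 (hU ▸ hzU) with rfl | hzp
    · exact absurd hzx (hnotXb x hx)
    · exact (hpLe_pq z m hmu).1
        (h3 z hzp ((hpLe_pq z x hx).2 hzx) ((hpLe_pq z y hy).2 hzy))
  have hmeet_qp : ∀ x ∈ p.u, ∀ y ∈ p.u, ∀ m : Node,
      IsMeetIn L ↑U x y m → IsMeetIn p.lt ↑p.u x y m := by
    intro x hx y hy m ⟨hm, h1, h2, h3⟩
    have hmU : m ∈ U := hm
    have hmp : m ∈ p.u := by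
      rcases Finset.mem_insert.1 (hU ▸ hmU) with rfl | h
      · exact absurd h1 (hnotXb x hx)
      · exact h
    refine ⟨hmp, (hpLe_pq m x hx).2 h1, (hpLe_pq m y hy).2 h2, ?_⟩
    intro z hz hzx hzy
    have hzp : z ∈ p.u := hz
    have hzU : z ∈ (↑U : Set Node) := by
      simp [hU]; exact Or.inr hzp
    exact (hpLe_pq z m hmp).2
      (h3 z hzU ((hpLe_pq z x hx).1 hzx) ((hpLe_pq z y hy).1 hzy))
  -- color bounds
  have hBbound : ∀ x y : Node, ∀ n : ℕ, p.c x y = some n → n < B := by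
    intro x y n h
    have hd := (hp.c_dom x y).1 (by simp [h])
    have hmem : n ∈ (p.u ×ˢ p.v).biUnion fun z => (p.c z.1 z.2).toFinset := by
      refine Finset.mem_biUnion.2 ⟨(x, y), Finset.mk_mem_product hd.1 hd.2.1, ?_⟩
      simp [h]
    have := Finset.le_sup (f := id) hmem
    simp only [id_eq] at this
    rw [hB]
    omega
  have hidx : ∀ (y₁ : Node) (h₁ : y₁ ∈ p.v) (y₂ : Node) (h₂ : y₂ ∈ p.v),
      (p.v.equivFin ⟨y₁, h₁⟩).val = (p.v.equivFin ⟨y₂, h₂⟩).val → y₁ = y₂ := by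
    intro y₁ h₁ y₂ h₂ h
    have := p.v.equivFin.injective (Fin.val_injective h)
    exact congrArg Subtype.val this
  refine ⟨⟨U, p.v, L, C⟩, ?_, ?_, X, by simp [hU], hXht⟩
  · constructor
    case root_u => exact Finset.mem_insert_of_mem hp.root_u
    case root_v => exact hp.root_v
    case v_sub => exact hp.v_sub
    case v_ht =>
      intro y hy
      obtain ⟨x, hx, hxy⟩ := hp.v_ht y hy
      exact ⟨x, Finset.mem_insert_of_mem hx, hxy⟩
    case lt_dom =>
      rintro x y (h | ⟨rfl, rfl⟩)
      · exact ⟨Finset.mem_insert_of_mem (hp.lt_dom x y h).1,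
          Finset.mem_insert_of_mem (hp.lt_dom x y h).2⟩
      · exact ⟨Finset.mem_insert_of_mem hp.root_u, Finset.mem_insert_self _ _⟩
    case lt_irrefl =>
      rintro x (h | ⟨rfl, h2⟩)
      · exact hp.lt_irrefl x h
      · exact hXne h2.symm
    case lt_trans =>
      rintro x y z (h1 | ⟨rfl, rfl⟩) (h2 | ⟨rfl, rfl⟩)
      · exact Or.inl (hp.lt_trans x y z h1 h2)
      · exact absurd h1 (hnotltnone x)
      · exact absurd h2 (hnotXlt z)
      · exact absurd rfl hXne
    case lt_root =>
      intro x hx hxne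
      rcases Finset.mem_insert.1 hx with rfl | hxp
      · exact Or.inr ⟨rfl, rfl⟩
      · exact Or.inl (hp.lt_root x hxp hxne)
    case lt_ht =>
      rintro x y (h | ⟨rfl, rfl⟩)
      · exact hp.lt_ht x y h
      · rw [hXht]; simp [nodeHt]
    case lt_pred_linear =>
      rintro x y z h1 h2
      by_cases hz : z = X
      · subst hz
        rw [hLtoX x h1, hLtoX y h2]
        exact Or.inr (Or.inr rfl)
      · have h1' := hLelim x z h1 hz
        have h2' := hLelim y z h2 hz
        rcases hp.lt_pred_linear x y z h1' h2' with h | h | h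
        · exact Or.inl (Or.inl h)
        · exact Or.inr (Or.inl (Or.inl h))
        · exact Or.inr (Or.inr h)
    case lt_meet =>
      intro x hx y hy
      have hx' : x ∈ U := hx
      have hy' : y ∈ U := hy
      rcases Finset.mem_insert.1 (hU ▸ hx') with heqx | hxp
      · rcases Finset.mem_insert.1 (hU ▸ hy') with heqy | hyp
        · exact ⟨x, hx, Or.inr rfl, Or.inr (heqx.trans heqy.symm), fun z _ h1 _ => h1⟩
        · -- x = X, y ∈ p.u : meet is none
          refine ⟨none, by simp [hU]; exact Or.inr hp.root_u,
            Or.inl (Or.inr ⟨rfl, heqx⟩), ?_, ?_⟩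
          · by_cases hyn : y = none
            · exact Or.inr hyn.symm
            · exact Or.inl (Or.inl (hp.lt_root y hyp hyn))
          · intro z hz hzx hzy
            rcases hzx with hzx | heqz
            · rw [heqx] at hzx
              exact Or.inr (hLtoX z hzx)
            · rw [heqz, heqx] at hzy
              exact absurd hzy (hnotXb y hyp)
      · rcases Finset.mem_insert.1 (hU ▸ hy') with heqy | hyp
        · -- y = X, x ∈ p.u : meet is none
          refine ⟨none, by simp [hU]; exact Or.inr hp.root_u, ?_,
            Or.inl (Or.inr ⟨rfl, heqy⟩), ?_⟩
          · by_cases hxn : x = none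
            · exact Or.inr hxn.symm
            · exact Or.inl (Or.inl (hp.lt_root x hxp hxn))
          · intro z hz hzx hzy
            rcases hzy with hzy | heqz
            · rw [heqy] at hzy
              exact Or.inr (hLtoX z hzy)
            · rw [heqz, heqy] at hzx
              exact absurd hzx (hnotXb x hxp)
        · obtain ⟨m, hm⟩ := hp.lt_meet x hxp y hyp
          exact ⟨m, hmeet_pq x hxp y hyp m hm⟩
    case c_dom =>
      intro x y
      by_cases hPxy : P x y
      · simp only [hC, dif_pos hPxy]
        obtain ⟨rfl, hyv, hyht, hlim⟩ := hPxy
        constructor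
        · intro _
          exact ⟨Finset.mem_insert_self _ _, hyv, by rw [hXht, hyht],
            α, hlim, hXht⟩
        · intro _; simp
      · simp only [hC, dif_neg hPxy]
        rw [hp.c_dom x y]
        constructor
        · rintro ⟨hxu, hyv, hht, δ, hδ, hxδ⟩
          exact ⟨Finset.mem_insert_of_mem hxu, hyv, hht, δ, hδ, hxδ⟩
        · rintro ⟨hxU, hyv, hht, δ, hδ, hxδ⟩
          rcases Finset.mem_insert.1 (hU ▸ hxU) with rfl | hxp
          · exfalso
            apply hPxy
            have hδα : δ = α := by
              rw [hXht] at hxδ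
              exact_mod_cast hxδ.symm
            exact ⟨rfl, hyv, by rw [← hht, hXht], hδα ▸ hδ⟩
          · exact ⟨hxp, hyv, hht, δ, hδ, hxδ⟩
    case c_spec =>
      intro x₁ y₁ x₂ y₂ n h1 h2 hne
      simp only [hC] at h1 h2
      by_cases hP1 : P x₁ y₁ <;> by_cases hP2 : P x₂ y₂
      · exfalso
        rw [dif_pos hP1] at h1
        rw [dif_pos hP2] at h2
        have hn1 := Option.some_injective _ h1
        have hn2 := Option.some_injective _ h2
        have heq : (p.v.equivFin ⟨y₁, hP1.2.1⟩).val = (p.v.equivFin ⟨y₂, hP2.2.1⟩).val := by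
          omega
        have hy := hidx y₁ hP1.2.1 y₂ hP2.2.1 heq
        exact hne ⟨hP1.1.trans hP2.1.symm, hy⟩
      · exfalso
        rw [dif_pos hP1] at h1
        rw [dif_neg hP2] at h2
        have hn1 := Option.some_injective _ h1
        have := hBbound x₂ y₂ n h2
        omega
      · exfalso
        rw [dif_neg hP1] at h1
        rw [dif_pos hP2] at h2
        have hn2 := Option.some_injective _ h2
        have := hBbound x₁ y₁ n h1
        omega
      · rw [dif_neg hP1] at h1
        rw [dif_neg hP2] at h2
        obtain ⟨H1, ⟨H2a, H2b, H2c⟩, H3, H4⟩ := hp.c_spec x₁ y₁ x₂ y₂ n h1 h2 hne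
        have hd1 := (hp.c_dom x₁ y₁).1 (by simp [h1])
        have hd2 := (hp.c_dom x₂ y₂).1 (by simp [h2])
        refine ⟨H1, ⟨?_, ?_, H2c⟩, H3, ?_⟩
        · intro h; exact H2a (hLelim x₁ x₂ h (hmemne x₂ hd2.1))
        · intro h; exact H2b (hLelim x₂ x₁ h (hmemne x₁ hd1.1))
        · intro m hm
          exact H4 m (hmeet_qp x₁ hd1.1 x₂ hd2.1 m hm)
  · refine ⟨Finset.subset_insert _ _, Finset.Subset.refl _, fun x y h => Or.inl h, ?_, ?_⟩
    · intro x y n h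
      simp only [hC]
      rw [dif_neg ?_]
      · exact h
      · intro hPxy
        have := (hp.c_dom x y).1 (by simp [h])
        exact hmemne x this.1 hPxy.1
    · intro x hx y hy m hm
      exact hmeet_pq x hx y hy m hm
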